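/- (Anticoncentration of the inflated uniform sphere law) Let d ≥ 1 and let Y be uniformly distributed on the sphere of radius √(3d) in ℝ^d. Then for every nonzero u ∈ ℝ^d, P( Yᵀu ≥ ‖u‖ ) ≥ 0.15·(1 − e^{−d/3}). -/

import Mathlib

open MeasureTheory
open scoped RealInnerProductSpace ENNReal

namespace SphereAnticonc

open Real Set

/-- quadratic upper bound for `exp (-t)`. -/
lemma exp_neg_le_quad {t : ℝ} (ht : 0 ≤ t) : Real.exp (-t) ≤ 1 - t + t ^ 2 / 2 := by
  have h1 : 1 + t + t ^ 2 / 2 ≤ Real.exp t := by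
    have h := Real.sum_le_exp_of_nonneg ht 3
    have he : ∑ i ∈ Finset.range 3, t ^ i / (Nat.factorial i) = 1 + t + t ^ 2 / 2 := by
      norm_num [Finset.sum_range_succ, Nat.factorial]
    linarith [he ▸ h]
  have hexp : (0:ℝ) < Real.exp (-t) := Real.exp_pos _
  have hprod : Real.exp (-t) * Real.exp t = 1 := by
    rw [← Real.exp_add]; simp
  have h2 : Real.exp (-t) * (1 + t + t ^ 2 / 2) ≤ 1 := by
    calc Real.exp (-t) * (1 + t + t ^ 2 / 2) ≤ Real.exp (-t) * Real.exp t := by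
          exact mul_le_mul_of_nonneg_left h1 hexp.le
      _ = 1 := hprod
  have hq : (0:ℝ) ≤ 1 - t + t ^ 2 / 2 := by nlinarith [sq_nonneg (t - 1)]
  nlinarith [mul_le_mul_of_nonneg_left h2 hq, mul_nonneg hexp.le (by positivity : (0:ℝ) ≤ t ^ 4)]

lemma lintegral_gauss_one {b : ℝ} (hb : 0 < b) :
    ∫⁻ x : ℝ, ENNReal.ofReal (Real.exp (-b * x ^ 2)) = ENNReal.ofReal (Real.sqrt (π / b)) := by
  rw [← integral_gaussian b,
    MeasureTheory.ofReal_integral_eq_lintegral_ofReal (integrable_exp_neg_mul_sq hb)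
      (Filter.Eventually.of_forall fun x => (Real.exp_pos _).le)]

lemma lintegral_gauss_pi {b : ℝ} (hb : 0 < b) (k : ℕ) :
    ∫⁻ w : Fin k → ℝ, ENNReal.ofReal (Real.exp (-b * ∑ i, w i ^ 2))
      = ENNReal.ofReal (Real.sqrt (π / b)) ^ k := by
  induction k with
  | zero =>
      rw [MeasureTheory.Measure.volume_pi_eq_dirac 0, lintegral_dirac]
      simp
  | succ n ih =>
      have hmp := MeasureTheory.volume_preserving_piFinSuccAbove (fun _ : Fin (n+1) => ℝ) 0
      have hint : ∫⁻ w : Fin (n+1) → ℝ, ENNReal.ofReal (Real.exp (-b * ∑ i, w i ^ 2))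
          = ∫⁻ z : ℝ × (Fin n → ℝ),
              (ENNReal.ofReal (Real.exp (-b * z.1 ^ 2))
                * ENNReal.ofReal (Real.exp (-b * ∑ j, z.2 j ^ 2))) := by
        rw [← hmp.lintegral_comp (by fun_prop)]
        apply lintegral_congr
        intro w
        rw [← ENNReal.ofReal_mul (Real.exp_pos _).le, ← Real.exp_add]
        congr 2
        rw [Fin.sum_univ_succAbove (fun i => w i ^ 2) 0]
        simp [MeasurableEquiv.piFinSuccAbove_apply, Fin.tail]
        ring
      have hfm : AEMeasurable (fun a : ℝ => ENNReal.ofReal (Real.exp (-b * a ^ 2))) volume := by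
        fun_prop
      have hsum : Measurable (fun w : Fin n → ℝ => ∑ j, w j ^ 2) :=
        Finset.measurable_sum _ fun j _ => (measurable_pi_apply j).pow_const 2
      have hgm : AEMeasurable (fun w : Fin n → ℝ => ENNReal.ofReal (Real.exp (-b * ∑ j, w j ^ 2)))
          volume :=
        (ENNReal.measurable_ofReal.comp (Real.measurable_exp.comp (hsum.const_mul (-b)))).aemeasurable
      rw [hint, MeasureTheory.Measure.volume_eq_prod,
        lintegral_prod_mul hfm hgm, lintegral_gauss_one hb, ih, pow_succ]
      ring

noncomputable def gden {k : ℕ} (x : EuclideanSpace ℝ (Fin k)) : ℝ≥0∞ :=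
  ENNReal.ofReal (Real.exp (-(1/2 : ℝ) * ‖x‖ ^ 2))

lemma gden_meas {k : ℕ} : Measurable (gden (k := k)) :=
  ENNReal.measurable_ofReal.comp
    (Real.measurable_exp.comp ((measurable_norm.pow_const 2).const_mul _))

noncomputable def gm (k : ℕ) : Measure (EuclideanSpace ℝ (Fin k)) :=
  volume.withDensity gden

instance {k : ℕ} : SFinite (gm k) := by unfold gm; infer_instance

lemma norm_sq_sum {k : ℕ} (x : EuclideanSpace ℝ (Fin k)) : ‖x‖ ^ 2 = ∑ i, x i ^ 2 := by
  rw [EuclideanSpace.norm_eq]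
  simp only [Real.norm_eq_abs, sq_abs]
  exact Real.sq_sqrt (Finset.sum_nonneg fun i _ => sq_nonneg _)

lemma gm_apply {k : ℕ} {s : Set (EuclideanSpace ℝ (Fin k))} (hs : MeasurableSet s) :
    gm k s = ∫⁻ x in s, gden x := withDensity_apply _ hs

lemma gm_map {k : ℕ} (f : EuclideanSpace ℝ (Fin k) ≃ₗᵢ[ℝ] EuclideanSpace ℝ (Fin k)) :
    Measure.map f (gm k) = gm k := by
  apply Measure.ext
  intro s hs
  rw [Measure.map_apply f.continuous.measurable hs, gm_apply (f.continuous.measurable hs),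
    gm_apply hs]
  have h1 : ∫⁻ x in (⇑f) ⁻¹' s, gden x = ∫⁻ x in (⇑f) ⁻¹' s, gden (f x) := by
    apply lintegral_congr
    intro x
    unfold gden
    rw [f.norm_map]
  rw [h1, (f.measurePreserving).setLIntegral_comp_preimage hs gden_meas]

lemma gm_transfer {k : ℕ} (s : Set (Fin k → ℝ)) (hs : MeasurableSet s) :
    gm k (((MeasurableEquiv.toLp 2 (Fin k → ℝ)).symm) ⁻¹' s)
      = ∫⁻ w in s, ENNReal.ofReal (Real.exp (-(1/2 : ℝ) * ∑ i, w i ^ 2)) := by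
  rw [gm_apply (((MeasurableEquiv.toLp 2 (Fin k → ℝ)).symm).measurable hs)]
  have hψ := EuclideanSpace.volume_preserving_symm_measurableEquiv_toLp (Fin k)
  rw [← hψ.setLIntegral_comp_preimage_emb
    ((MeasurableEquiv.toLp 2 (Fin k → ℝ)).symm).measurableEmbedding
    (fun w => ENNReal.ofReal (Real.exp (-(1/2 : ℝ) * ∑ i, w i ^ 2))) s]
  apply lintegral_congr
  intro x
  unfold gden
  rw [norm_sq_sum]
  congr 2

lemma gm_univ (k : ℕ) : gm k univ = ENNReal.ofReal (Real.sqrt (2*π)) ^ k := by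
  have h := gm_transfer (univ : Set (Fin k → ℝ)) MeasurableSet.univ
  simp only [Set.preimage_univ] at h
  rw [h, Measure.restrict_univ, lintegral_gauss_pi (by norm_num : (0:ℝ) < 1/2),
    show π/(1/2:ℝ) = 2*π by ring]

lemma chernoff (n : ℕ) :
    ∫⁻ w : Fin n → ℝ in {w | ¬ (∑ i, w i ^ 2 ≤ 3*(n:ℝ)+2)},
        ENNReal.ofReal (Real.exp (-(1/2 : ℝ) * ∑ i, w i ^ 2))
      ≤ ENNReal.ofReal (Real.exp (-(21*(n:ℝ)+14)/20) * Real.sqrt (10/3) ^ n)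
          * ENNReal.ofReal (Real.sqrt (2*π)) ^ n := by
  have hsum : Measurable (fun w : Fin n → ℝ => ∑ i, w i ^ 2) :=
    Finset.measurable_sum _ fun j _ => (measurable_pi_apply j).pow_const 2
  have hsmeas : MeasurableSet {w : Fin n → ℝ | ¬ (∑ i, w i ^ 2 ≤ 3*(n:ℝ)+2)} :=
    (measurableSet_le hsum measurable_const).compl
  have step1 : ∫⁻ w : Fin n → ℝ in {w | ¬ (∑ i, w i ^ 2 ≤ 3*(n:ℝ)+2)},
        ENNReal.ofReal (Real.exp (-(1/2 : ℝ) * ∑ i, w i ^ 2))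
      ≤ ∫⁻ w : Fin n → ℝ, ENNReal.ofReal (Real.exp (-(21*(n:ℝ)+14)/20))
          * ENNReal.ofReal (Real.exp (-(3/20 : ℝ) * ∑ i, w i ^ 2)) := by
    refine le_trans (setLIntegral_mono' hsmeas ?_) (setLIntegral_le_lintegral _ _)
    intro w hw
    simp only [Set.mem_setOf_eq, not_le] at hw
    rw [← ENNReal.ofReal_mul (Real.exp_pos _).le, ← Real.exp_add]
    apply ENNReal.ofReal_le_ofReal
    apply Real.exp_le_exp.2
    nlinarith [hw]
  have step2 : ∫⁻ w : Fin n → ℝ, ENNReal.ofReal (Real.exp (-(21*(n:ℝ)+14)/20))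
          * ENNReal.ofReal (Real.exp (-(3/20 : ℝ) * ∑ i, w i ^ 2))
      = ENNReal.ofReal (Real.exp (-(21*(n:ℝ)+14)/20))
          * (ENNReal.ofReal (Real.sqrt (π/(3/20)))) ^ n := by
    have hg : Measurable fun w : Fin n → ℝ => ENNReal.ofReal (Real.exp (-(3/20:ℝ) * ∑ i, w i ^ 2)) :=
      ENNReal.measurable_ofReal.comp (Real.measurable_exp.comp (hsum.const_mul _))
    rw [lintegral_const_mul _ hg, lintegral_gauss_pi (by norm_num : (0:ℝ) < 3/20)]
  have step3 : (ENNReal.ofReal (Real.sqrt (π/(3/20)))) ^ n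
      = ENNReal.ofReal (Real.sqrt (10/3) ^ n) * ENNReal.ofReal (Real.sqrt (2*π)) ^ n := by
    rw [show π/(3/20 : ℝ) = (10/3) * (2*π) by ring, Real.sqrt_mul (by norm_num : (0:ℝ) ≤ 10/3),
      ENNReal.ofReal_mul (Real.sqrt_nonneg _), mul_pow, ← ENNReal.ofReal_pow (Real.sqrt_nonneg _)]
  calc ∫⁻ w : Fin n → ℝ in {w | ¬ (∑ i, w i ^ 2 ≤ 3*(n:ℝ)+2)},
        ENNReal.ofReal (Real.exp (-(1/2 : ℝ) * ∑ i, w i ^ 2))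
      ≤ ENNReal.ofReal (Real.exp (-(21*(n:ℝ)+14)/20))
          * (ENNReal.ofReal (Real.sqrt (π/(3/20)))) ^ n := step1.trans step2.le
    _ = ENNReal.ofReal (Real.exp (-(21*(n:ℝ)+14)/20) * Real.sqrt (10/3) ^ n)
          * ENNReal.ofReal (Real.sqrt (2*π)) ^ n := by
        rw [step3, ← mul_assoc,
          ← ENNReal.ofReal_mul (Real.exp_pos _).le]

lemma eps_le (n : ℕ) :
    Real.exp (-(21*(n:ℝ)+14)/20) * Real.sqrt (10/3) ^ n
      ≤ 20/21 * Real.exp (-((n:ℝ)+1)/3) := by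
  induction n with
  | zero =>
      simp only [Nat.cast_zero, pow_zero, mul_one]
      have h1 : (11/30 : ℝ) + 1 ≤ Real.exp (11/30) := Real.add_one_le_exp _
      have h2 : Real.exp (-(11/30) : ℝ) * Real.exp (11/30) = 1 := by
        rw [← Real.exp_add]; norm_num
      have h3 : Real.exp (-(11/30) : ℝ) ≤ 20/21 := by
        nlinarith [Real.exp_pos (-(11/30) : ℝ)]
      have h4 : Real.exp (-(21*(0:ℝ)+14)/20) = Real.exp (-(11/30) : ℝ) * Real.exp (-(1:ℝ)/3) := by
        rw [← Real.exp_add]; norm_num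
      calc Real.exp (-(21*(0:ℝ)+14)/20) = Real.exp (-(11/30) : ℝ) * Real.exp (-(1:ℝ)/3) := h4
        _ ≤ 20/21 * Real.exp (-(1:ℝ)/3) :=
            mul_le_mul_of_nonneg_right h3 (Real.exp_pos _).le
        _ = 20/21 * Real.exp (-((0:ℝ)+1)/3) := by norm_num
  | succ n ih =>
      have hfac : Real.exp (-(21/20) : ℝ) * Real.sqrt (10/3) ≤ Real.exp (-(1:ℝ)/3) := by
        have h1 : (10/3 : ℝ) ≤ Real.exp (43/30) := by
          have h := Real.sum_le_exp_of_nonneg (by norm_num : (0:ℝ) ≤ 43/30) 3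
          have he : ∑ i ∈ Finset.range 3, (43/30:ℝ) ^ i / (Nat.factorial i)
              = 1 + 43/30 + (43/30:ℝ) ^ 2 / 2 := by
            norm_num [Finset.sum_range_succ, Nat.factorial]
          rw [he] at h
          nlinarith [h]
        have h2 : Real.sqrt (10/3 : ℝ) ≤ Real.exp (43/60) := by
          have : Real.sqrt (Real.exp (43/30)) = Real.exp (43/60) := by
            rw [show (43/30 : ℝ) = 43/60 + 43/60 by ring, Real.exp_add,
              ← sq (Real.exp (43/60))]
            exact Real.sqrt_sq (Real.exp_pos _).le
          calc Real.sqrt (10/3 : ℝ) ≤ Real.sqrt (Real.exp (43/30)) := Real.sqrt_le_sqrt h1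
            _ = Real.exp (43/60) := this
        calc Real.exp (-(21/20) : ℝ) * Real.sqrt (10/3)
            ≤ Real.exp (-(21/20) : ℝ) * Real.exp (43/60) :=
              mul_le_mul_of_nonneg_left h2 (Real.exp_pos _).le
          _ = Real.exp (-(1:ℝ)/3) := by rw [← Real.exp_add]; norm_num
      have hrw : Real.exp (-(21*((n:ℝ)+1)+14)/20) * Real.sqrt (10/3) ^ (n+1)
          = (Real.exp (-(21*(n:ℝ)+14)/20) * Real.sqrt (10/3) ^ n)
            * (Real.exp (-(21/20) : ℝ) * Real.sqrt (10/3)) := by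
        rw [pow_succ, show Real.exp (-(21*((n:ℝ)+1)+14)/20)
          = Real.exp (-(21*(n:ℝ)+14)/20) * Real.exp (-(21/20) : ℝ) from by
            rw [← Real.exp_add]; congr 1; ring]
        ring
      push_cast
      rw [hrw]
      have hpos : (0:ℝ) ≤ Real.exp (-(21*(n:ℝ)+14)/20) * Real.sqrt (10/3) ^ n :=
        mul_nonneg (Real.exp_pos _).le (pow_nonneg (Real.sqrt_nonneg _) _)
      calc (Real.exp (-(21*(n:ℝ)+14)/20) * Real.sqrt (10/3) ^ n)
            * (Real.exp (-(21/20) : ℝ) * Real.sqrt (10/3))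
          ≤ (20/21 * Real.exp (-((n:ℝ)+1)/3)) * Real.exp (-(1:ℝ)/3) := by
            apply mul_le_mul ih hfac (mul_nonneg (Real.exp_pos _).le (Real.sqrt_nonneg _))
            positivity
        _ = 20/21 * Real.exp (-((n:ℝ)+1+1)/3) := by
            rw [mul_assoc, ← Real.exp_add]
            congr 2
            ring

lemma sqrt_two_pi_lb : (1030/411 : ℝ) ≤ Real.sqrt (2*π) := by
  have h : ((1030/411 : ℝ)) ^ 2 ≤ 2*π := by nlinarith [Real.pi_gt_d6]
  calc (1030/411 : ℝ) = Real.sqrt ((1030/411 : ℝ)^2) := (Real.sqrt_sq (by norm_num)).symm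
    _ ≤ Real.sqrt (2*π) := Real.sqrt_le_sqrt h

lemma tail_lb :
    ENNReal.ofReal ((63/400) * Real.sqrt (2*π))
      ≤ ∫⁻ x : ℝ in Ici 1, ENNReal.ofReal (Real.exp (-(1/2 : ℝ) * x ^ 2)) := by
  have hint : IntegrableOn (fun x : ℝ => Real.exp (-(1/2 : ℝ) * x^2)) (Ici 1) volume :=
    (integrable_exp_neg_mul_sq (by norm_num : (0:ℝ) < 1/2)).integrableOn
  rw [← MeasureTheory.ofReal_integral_eq_lintegral_ofReal hint
    (Filter.Eventually.of_forall fun x => (Real.exp_pos _).le)]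
  apply ENNReal.ofReal_le_ofReal
  have h0 : ∫ x in Ici (1:ℝ), Real.exp (-(1/2 : ℝ) * x^2)
      = ∫ x in Ioi (1:ℝ), Real.exp (-(1/2 : ℝ) * x^2) := integral_Ici_eq_integral_Ioi
  have hIoi0 : ∫ x in Ioi (0:ℝ), Real.exp (-(1/2 : ℝ) * x^2) = Real.sqrt (2*π)/2 := by
    rw [integral_gaussian_Ioi (1/2), show π/(1/2:ℝ) = 2*π by ring]
  have hsplit : (∫ x in Ioc (0:ℝ) 1, Real.exp (-(1/2 : ℝ) * x^2))
      + ∫ x in Ioi (1:ℝ), Real.exp (-(1/2 : ℝ) * x^2)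
      = ∫ x in Ioi (0:ℝ), Real.exp (-(1/2 : ℝ) * x^2) := by
    rw [← MeasureTheory.setIntegral_union (Set.Ioc_disjoint_Ioi le_rfl) measurableSet_Ioi
      ((integrable_exp_neg_mul_sq (by norm_num : (0:ℝ) < 1/2)).integrableOn)
      ((integrable_exp_neg_mul_sq (by norm_num : (0:ℝ) < 1/2)).integrableOn),
      Set.Ioc_union_Ioi_eq_Ioi zero_le_one]
  have hIoc : ∫ x in Ioc (0:ℝ) 1, Real.exp (-(1/2 : ℝ) * x^2) ≤ 103/120 := by
    rw [← intervalIntegral.integral_of_le zero_le_one]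
    have hle : ∫ x in (0:ℝ)..1, Real.exp (-(1/2 : ℝ) * x^2)
        ≤ ∫ x in (0:ℝ)..1, (1 - x^2/2 + x^4/8) := by
      apply intervalIntegral.integral_mono_on zero_le_one
      · exact (integrable_exp_neg_mul_sq (by norm_num : (0:ℝ) < 1/2)).intervalIntegrable
      · exact (Continuous.intervalIntegrable (by fun_prop) _ _)
      · intro x hx
        have h := exp_neg_le_quad (t := x^2/2) (by positivity)
        calc Real.exp (-(1/2 : ℝ) * x^2) = Real.exp (-(x^2/2)) := by ring_nf
          _ ≤ 1 - x^2/2 + (x^2/2)^2/2 := h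
          _ = 1 - x^2/2 + x^4/8 := by ring
    have hpoly : ∫ x in (0:ℝ)..1, (1 - x^2/2 + x^4/8) = 103/120 := by
      have h1 : ∫ x in (0:ℝ)..1, (1 - x^2/2 + x^4/8)
          = ((∫ x in (0:ℝ)..1, (1:ℝ)) - (∫ x in (0:ℝ)..1, x^2)/2) + (∫ x in (0:ℝ)..1, x^4)/8 := by
        rw [← intervalIntegral.integral_div, ← intervalIntegral.integral_div,
          ← intervalIntegral.integral_sub, ← intervalIntegral.integral_add]
        · exact ((Continuous.intervalIntegrable (by fun_prop) _ _).sub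
            (Continuous.intervalIntegrable (by fun_prop) _ _))
        · exact (Continuous.intervalIntegrable (by fun_prop) _ _)
        · exact (Continuous.intervalIntegrable (by fun_prop) _ _)
        · exact (Continuous.intervalIntegrable (by fun_prop) _ _)
      rw [h1, integral_pow, integral_pow]
      norm_num
    linarith
  have hP1 : (63/400 : ℝ) * Real.sqrt (2*π) ≤ Real.sqrt (2*π)/2 - 103/120 := by
    have h := sqrt_two_pi_lb
    nlinarith
  rw [h0]
  linarith

lemma gm_main (n : ℕ) :
    ENNReal.ofReal ((3/20) * (1 - Real.exp (-((n:ℝ)+1)/3)))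
        * (ENNReal.ofReal (Real.sqrt (2*π)) ^ (n+1))
      ≤ gm (n+1) {g : EuclideanSpace ℝ (Fin (n+1)) | ‖g‖ ≤ Real.sqrt (3*((n:ℝ)+1)) * g 0} := by
  classical
  set R : ℝ := Real.sqrt (3*((n:ℝ)+1)) with hRdef
  have hRsq : R ^ 2 = 3*((n:ℝ)+1) := Real.sq_sqrt (by positivity)
  have hRpos : 0 < R := Real.sqrt_pos.2 (by positivity)
  set ψ := (MeasurableEquiv.toLp 2 (Fin (n+1) → ℝ)).symm with hψdef
  set η := MeasurableEquiv.piFinSuccAbove (fun _ : Fin (n+1) => ℝ) (0 : Fin (n+1)) with hηdef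
  have hB1meas : MeasurableSet (Ici (1:ℝ)) := measurableSet_Ici
  have hsum : Measurable (fun w : Fin n → ℝ => ∑ j, w j ^ 2) :=
    Finset.measurable_sum _ fun j _ => (measurable_pi_apply j).pow_const 2
  have hB2meas : MeasurableSet {w : Fin n → ℝ | ∑ j, w j ^ 2 ≤ 3*(n:ℝ)+2} :=
    measurableSet_le hsum measurable_const
  set B : Set (ℝ × (Fin n → ℝ)) := (Ici (1:ℝ)) ×ˢ {w : Fin n → ℝ | ∑ j, w j ^ 2 ≤ 3*(n:ℝ)+2}
    with hBdef
  have hBmeas : MeasurableSet B := hB1meas.prod hB2meas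
  set s : Set (Fin (n+1) → ℝ) := η ⁻¹' B with hsdef
  have hsmeas : MeasurableSet s := η.measurable hBmeas
  -- inclusion
  have hsub : ψ ⁻¹' s ⊆ {g : EuclideanSpace ℝ (Fin (n+1)) | ‖g‖ ≤ R * g 0} := by
    intro g hg
    simp only [Set.mem_preimage, hsdef, hBdef, hηdef, hψdef, Set.mem_prod,
      MeasurableEquiv.piFinSuccAbove_apply, Set.mem_Ici, Set.mem_setOf_eq,
      Fin.insertNthEquiv_symm_apply, Fin.removeNth, Fin.succAbove_zero,
      MeasurableEquiv.coe_toLp_symm] at hg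
    obtain ⟨h1, h2⟩ := hg
    have hn2 : ‖g‖^2 = g 0^2 + ∑ j, g (Fin.succ j) ^ 2 := by
      rw [norm_sq_sum, Fin.sum_univ_succ]
    have hle2 : ‖g‖^2 ≤ (R * g 0)^2 := by
      have : (R * g 0)^2 = (3*((n:ℝ)+1)) * g 0 ^2 := by rw [mul_pow, hRsq]
      rw [this, hn2]
      have hg1 : (1:ℝ) ≤ g 0 ^ 2 := by nlinarith
      have key : (3*(n:ℝ)+2) * 1 ≤ (3*(n:ℝ)+2) * g 0 ^ 2 :=
        mul_le_mul_of_nonneg_left hg1 (by positivity)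
      linarith
    have hRg : 0 ≤ R * g 0 := mul_nonneg hRpos.le (by linarith)
    calc ‖g‖ = Real.sqrt (‖g‖^2) := (Real.sqrt_sq (norm_nonneg g)).symm
      _ ≤ Real.sqrt ((R * g 0)^2) := Real.sqrt_le_sqrt hle2
      _ = R * g 0 := Real.sqrt_sq hRg
  have hGle : gm (n+1) (ψ ⁻¹' s) ≤ gm (n+1) {g : EuclideanSpace ℝ (Fin (n+1)) | ‖g‖ ≤ R * g 0} :=
    measure_mono hsub
  -- compute the measure of the product event
  have hη := MeasureTheory.volume_preserving_piFinSuccAbove (fun _ : Fin (n+1) => ℝ) 0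
  have hf1 : Measurable (fun x : ℝ => ENNReal.ofReal (Real.exp (-(1/2 : ℝ) * x ^ 2))) :=
    ENNReal.measurable_ofReal.comp (Real.measurable_exp.comp ((measurable_id.pow_const 2).const_mul _))
  have hf2 : Measurable (fun w : Fin n → ℝ => ENNReal.ofReal (Real.exp (-(1/2 : ℝ) * ∑ j, w j ^ 2))) :=
    ENNReal.measurable_ofReal.comp (Real.measurable_exp.comp (hsum.const_mul _))
  have h2 : ∫⁻ w in s, ENNReal.ofReal (Real.exp (-(1/2 : ℝ) * ∑ i, w i ^ 2))
      = ∫⁻ z in B, (ENNReal.ofReal (Real.exp (-(1/2 : ℝ) * z.1 ^ 2))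
          * ENNReal.ofReal (Real.exp (-(1/2 : ℝ) * ∑ j, z.2 j ^ 2))) := by
    rw [← hη.setLIntegral_comp_preimage_emb η.measurableEmbedding
      (fun z : ℝ × (Fin n → ℝ) => ENNReal.ofReal (Real.exp (-(1/2 : ℝ) * z.1 ^ 2))
        * ENNReal.ofReal (Real.exp (-(1/2 : ℝ) * ∑ j, z.2 j ^ 2))) B]
    apply lintegral_congr
    intro w
    rw [← ENNReal.ofReal_mul (Real.exp_pos _).le, ← Real.exp_add]
    congr 2
    rw [Fin.sum_univ_succAbove (fun i => w i ^ 2) 0]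
    simp only [hηdef, MeasurableEquiv.piFinSuccAbove_apply, Fin.insertNthEquiv_symm_apply,
      Fin.removeNth, Fin.succAbove_zero]
    ring
  have h3 : ∫⁻ z in B, (ENNReal.ofReal (Real.exp (-(1/2 : ℝ) * z.1 ^ 2))
          * ENNReal.ofReal (Real.exp (-(1/2 : ℝ) * ∑ j, z.2 j ^ 2)))
      = (∫⁻ x in Ici (1:ℝ), ENNReal.ofReal (Real.exp (-(1/2 : ℝ) * x ^ 2)))
        * ∫⁻ w in {w : Fin n → ℝ | ∑ j, w j ^ 2 ≤ 3*(n:ℝ)+2},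
            ENNReal.ofReal (Real.exp (-(1/2 : ℝ) * ∑ j, w j ^ 2)) := by
    rw [hBdef, MeasureTheory.Measure.volume_eq_prod, ← Measure.prod_restrict,
      lintegral_prod_mul hf1.aemeasurable hf2.aemeasurable]
  -- lower bound for the B2 factor
  set β : ℝ := 20/21 * Real.exp (-((n:ℝ)+1)/3) with hβdef
  have hβpos : 0 ≤ β := by positivity
  have hexple : Real.exp (-((n:ℝ)+1)/3) ≤ 1 := by
    apply Real.exp_le_one_iff.2
    have := Nat.cast_nonneg (α := ℝ) n
    linarith
  have hβlt : β ≤ 20/21 := by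
    rw [hβdef]; nlinarith
  have hJ : ENNReal.ofReal ((1 - β) * Real.sqrt (2*π) ^ n)
      ≤ ∫⁻ w in {w : Fin n → ℝ | ∑ j, w j ^ 2 ≤ 3*(n:ℝ)+2},
          ENNReal.ofReal (Real.exp (-(1/2 : ℝ) * ∑ j, w j ^ 2)) := by
    have htot : (∫⁻ w in {w : Fin n → ℝ | ∑ j, w j ^ 2 ≤ 3*(n:ℝ)+2},
          ENNReal.ofReal (Real.exp (-(1/2 : ℝ) * ∑ j, w j ^ 2)))
        + ∫⁻ w in {w : Fin n → ℝ | ∑ j, w j ^ 2 ≤ 3*(n:ℝ)+2}ᶜ,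
          ENNReal.ofReal (Real.exp (-(1/2 : ℝ) * ∑ j, w j ^ 2))
        = ENNReal.ofReal (Real.sqrt (2*π) ^ n) := by
      rw [lintegral_add_compl _ hB2meas, lintegral_gauss_pi (by norm_num : (0:ℝ) < 1/2),
        show π/(1/2:ℝ) = 2*π by ring, ← ENNReal.ofReal_pow (Real.sqrt_nonneg _)]
    have hK : ∫⁻ w in {w : Fin n → ℝ | ∑ j, w j ^ 2 ≤ 3*(n:ℝ)+2}ᶜ,
          ENNReal.ofReal (Real.exp (-(1/2 : ℝ) * ∑ j, w j ^ 2))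
        ≤ ENNReal.ofReal (β * Real.sqrt (2*π) ^ n) := by
      have hc := chernoff n
      have hcc : {w : Fin n → ℝ | ∑ j, w j ^ 2 ≤ 3*(n:ℝ)+2}ᶜ
          = {w : Fin n → ℝ | ¬ (∑ i, w i ^ 2 ≤ 3*(n:ℝ)+2)} := by
        ext w; simp
      rw [hcc]
      refine hc.trans ?_
      rw [← ENNReal.ofReal_pow (Real.sqrt_nonneg _),
        ← ENNReal.ofReal_mul (mul_nonneg (Real.exp_pos _).le (pow_nonneg (Real.sqrt_nonneg _) _))]
      apply ENNReal.ofReal_le_ofReal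
      apply mul_le_mul_of_nonneg_right (eps_le n) (pow_nonneg (Real.sqrt_nonneg _) _)
    have hab : ENNReal.ofReal ((1 - β) * Real.sqrt (2*π) ^ n)
        + ENNReal.ofReal (β * Real.sqrt (2*π) ^ n) = ENNReal.ofReal (Real.sqrt (2*π) ^ n) := by
      rw [← ENNReal.ofReal_add (by nlinarith [pow_nonneg (Real.sqrt_nonneg (2*π)) n])
        (mul_nonneg hβpos (pow_nonneg (Real.sqrt_nonneg _) _))]
      congr 1
      ring
    have := hab.trans htot.symm
    have hle : ENNReal.ofReal ((1 - β) * Real.sqrt (2*π) ^ n)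
          + ENNReal.ofReal (β * Real.sqrt (2*π) ^ n)
        ≤ (∫⁻ w in {w : Fin n → ℝ | ∑ j, w j ^ 2 ≤ 3*(n:ℝ)+2},
            ENNReal.ofReal (Real.exp (-(1/2 : ℝ) * ∑ j, w j ^ 2)))
          + ENNReal.ofReal (β * Real.sqrt (2*π) ^ n) := by
      rw [this]
      exact add_le_add_right hK _
    exact (ENNReal.add_le_add_iff_right ENNReal.ofReal_ne_top).1 hle
  -- combine
  have hI := tail_lb
  have hprod : ENNReal.ofReal ((63/400) * Real.sqrt (2*π))
        * ENNReal.ofReal ((1 - β) * Real.sqrt (2*π) ^ n)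
      ≤ gm (n+1) (ψ ⁻¹' s) := by
    rw [gm_transfer s hsmeas, h2, h3]
    exact mul_le_mul' hI hJ
  refine le_trans ?_ (hprod.trans hGle)
  rw [← ENNReal.ofReal_pow (Real.sqrt_nonneg _),
    ← ENNReal.ofReal_mul' (pow_nonneg (Real.sqrt_nonneg _) _),
    ← ENNReal.ofReal_mul (by positivity : (0:ℝ) ≤ 63/400 * Real.sqrt (2*π))]
  apply ENNReal.ofReal_le_ofReal
  have hsq : (0:ℝ) ≤ Real.sqrt (2*π) ^ (n+1) := pow_nonneg (Real.sqrt_nonneg _) _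
  have he : Real.exp (-((n:ℝ)+1)/3) = 21/20 * β := by rw [hβdef]; ring
  calc (3/20) * (1 - Real.exp (-((n:ℝ)+1)/3)) * Real.sqrt (2*π) ^ (n+1)
      ≤ (63/400) * (1 - β) * Real.sqrt (2*π) ^ (n+1) := by
        apply mul_le_mul_of_nonneg_right _ hsq
        rw [he]
        nlinarith [hβpos]
    _ = 63/400 * Real.sqrt (2*π) * ((1 - β) * Real.sqrt (2*π) ^ n) := by
        rw [pow_succ]
        ring

lemma gm_zero_set (k : ℕ) (hk : 0 < k) : gm k {(0 : EuclideanSpace ℝ (Fin k))} = 0 := by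
  have h0ψ : ((MeasurableEquiv.toLp 2 (Fin k → ℝ)).symm) (0 : EuclideanSpace ℝ (Fin k))
      = (0 : Fin k → ℝ) := rfl
  have hpre : (⇑((MeasurableEquiv.toLp 2 (Fin k → ℝ)).symm)) ⁻¹' {(0 : Fin k → ℝ)}
      = {(0 : EuclideanSpace ℝ (Fin k))} := by
    ext x
    simp only [Set.mem_preimage, Set.mem_singleton_iff]
    constructor
    · intro h
      exact ((MeasurableEquiv.toLp 2 (Fin k → ℝ)).symm).injective (h.trans h0ψ.symm)
    · rintro rfl
      exact h0ψ
  have hvol : (volume : Measure (Fin k → ℝ)) {(0 : Fin k → ℝ)} = 0 := by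
    rw [← Set.univ_pi_singleton (0 : Fin k → ℝ), volume_pi_pi]
    simp only [Pi.zero_apply, Real.volume_singleton]
    rw [Finset.prod_const, zero_pow]
    simp [Fintype.card_fin]
    omega
  rw [← hpre, gm_transfer _ (measurableSet_singleton _), setLIntegral_measure_zero _ _ hvol]

end SphereAnticonc

open SphereAnticonc Real Set in
/-- **Anticoncentration of the inflated uniform sphere law.** If `Y` is uniformly
distributed on the sphere of radius `√(3d)` in `ℝ^d` (characterized here as a probability
measure giving full mass to that sphere and invariant under every linear isometry of
`ℝ^d`), then for every nonzero `u`, `P(Yᵀu ≥ ‖u‖) ≥ 0.15·(1 − e^{−d/3})`. -/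
theorem sphere_anticoncentration (d : ℕ) (hd : 1 ≤ d)
    (ν : Measure (EuclideanSpace ℝ (Fin d))) [IsProbabilityMeasure ν]
    (hsupp : ν (Metric.sphere (0 : EuclideanSpace ℝ (Fin d)) (Real.sqrt (3 * d))) = 1)
    (hinv : ∀ f : EuclideanSpace ℝ (Fin d) ≃ₗᵢ[ℝ] EuclideanSpace ℝ (Fin d),
      Measure.map f ν = ν)
    (u : EuclideanSpace ℝ (Fin d)) (hu : u ≠ 0) :
    ENNReal.ofReal (0.15 * (1 - Real.exp (-(d : ℝ) / 3)))
      ≤ ν {y | ‖u‖ ≤ ⟪y, u⟫} := by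
  obtain ⟨n, rfl⟩ : ∃ n, d = n + 1 := ⟨d - 1, (Nat.succ_pred_eq_of_pos hd).symm⟩
  have hu0 : (0:ℝ) < ‖u‖ := norm_pos_iff.2 hu
  set e : EuclideanSpace ℝ (Fin (n+1)) := (‖u‖⁻¹ : ℝ) • u with hedef
  have hnorme : ‖e‖ = 1 := by
    rw [hedef, norm_smul, norm_inv, norm_norm, inv_mul_cancel₀ hu0.ne']
  -- rewrite the target set
  have hset : {y : EuclideanSpace ℝ (Fin (n+1)) | ‖u‖ ≤ ⟪y, u⟫} = {y | 1 ≤ ⟪y, e⟫} := by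
    ext y
    simp only [Set.mem_setOf_eq, hedef, real_inner_smul_right]
    rw [le_inv_mul_iff₀ hu0, mul_one]
  -- constancy of ν on half spaces determined by unit vectors
  have hmeasA : ∀ v : EuclideanSpace ℝ (Fin (n+1)),
      MeasurableSet {y : EuclideanSpace ℝ (Fin (n+1)) | 1 ≤ ⟪y, v⟫} := fun v =>
    measurableSet_le measurable_const ((continuous_id.inner continuous_const).measurable)
  have hνconst : ∀ v w : EuclideanSpace ℝ (Fin (n+1)), ‖v‖ = ‖w‖ →
      ν {y | 1 ≤ ⟪y, v⟫} = ν {y | 1 ≤ ⟪y, w⟫} := by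
    intro v w hvw
    set F := Submodule.reflection (ℝ ∙ (w - v))ᗮ with hFdef
    have hf : F w = v := Submodule.reflection_sub hvw.symm
    calc ν {y | 1 ≤ ⟪y, v⟫}
        = Measure.map F ν {y | 1 ≤ ⟪y, v⟫} := by rw [hinv]
      _ = ν (F ⁻¹' {y | 1 ≤ ⟪y, v⟫}) :=
          Measure.map_apply F.continuous.measurable (hmeasA v)
      _ = ν {y | 1 ≤ ⟪y, w⟫} := by
          congr 1
          ext y
          simp only [Set.mem_preimage, Set.mem_setOf_eq]
          rw [← hf, LinearIsometryEquiv.inner_map_map]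
  -- constancy of gm on the dual family of sets
  have hmeasB : ∀ v : EuclideanSpace ℝ (Fin (n+1)),
      MeasurableSet {g : EuclideanSpace ℝ (Fin (n+1)) | ‖g‖ ≤ ⟪v, g⟫} := fun v =>
    measurableSet_le continuous_norm.measurable ((continuous_const.inner continuous_id).measurable)
  have hmconst : ∀ v w : EuclideanSpace ℝ (Fin (n+1)), ‖v‖ = ‖w‖ →
      gm (n+1) {g | ‖g‖ ≤ ⟪v, g⟫} = gm (n+1) {g | ‖g‖ ≤ ⟪w, g⟫} := by
    intro v w hvw
    set F := Submodule.reflection (ℝ ∙ (w - v))ᗮ with hFdef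
    have hf : F w = v := Submodule.reflection_sub hvw.symm
    calc gm (n+1) {g | ‖g‖ ≤ ⟪v, g⟫}
        = Measure.map F (gm (n+1)) {g | ‖g‖ ≤ ⟪v, g⟫} := by
          rw [gm_map]
      _ = gm (n+1) (F ⁻¹' {g | ‖g‖ ≤ ⟪v, g⟫}) :=
          Measure.map_apply F.continuous.measurable (hmeasB v)
      _ = gm (n+1) {g | ‖g‖ ≤ ⟪w, g⟫} := by
          congr 1
          ext g
          simp only [Set.mem_preimage, Set.mem_setOf_eq, LinearIsometryEquiv.norm_map]
          rw [← hf, LinearIsometryEquiv.inner_map_map]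
  -- a.e. facts
  set R : ℝ := Real.sqrt (3 * ((n+1 : ℕ) : ℝ)) with hRdef
  have hRpos : 0 < R := Real.sqrt_pos.2 (by positivity)
  have hae_ν : ∀ᵐ y ∂ν, ‖y‖ = R := by
    have hcl : MeasurableSet (Metric.sphere (0 : EuclideanSpace ℝ (Fin (n+1))) R) :=
      Metric.isClosed_sphere.measurableSet
    have h0 : ν (Metric.sphere (0 : EuclideanSpace ℝ (Fin (n+1))) R)ᶜ = 0 := by
      rw [measure_compl hcl (measure_ne_top _ _), measure_univ, hsupp, tsub_self]
    have h1 : ∀ᵐ y ∂ν, y ∈ Metric.sphere (0 : EuclideanSpace ℝ (Fin (n+1))) R := by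
      rw [MeasureTheory.ae_iff]
      exact h0
    filter_upwards [h1] with y hy
    rwa [mem_sphere_zero_iff_norm] at hy
  have hae_m : ∀ᵐ g ∂(gm (n+1)), g ≠ (0 : EuclideanSpace ℝ (Fin (n+1))) := by
    have hss : {g : EuclideanSpace ℝ (Fin (n+1)) | ¬ g ≠ 0}
        = {(0 : EuclideanSpace ℝ (Fin (n+1)))} := by
      ext g; simp
    rw [MeasureTheory.ae_iff, hss]
    exact gm_zero_set (n+1) (Nat.succ_pos n)
  -- Fubini on the bi-event
  set S : Set (EuclideanSpace ℝ (Fin (n+1)) × EuclideanSpace ℝ (Fin (n+1))) :=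
    {z | ‖z.2‖ ≤ ⟪z.1, z.2⟫} with hSdef
  have hSmeas : MeasurableSet S :=
    measurableSet_le continuous_snd.norm.measurable
      ((continuous_fst.inner continuous_snd).measurable)
  have hfub1 : (ν.prod (gm (n+1))) S = ∫⁻ y, gm (n+1) {g | ‖g‖ ≤ ⟪y, g⟫} ∂ν :=
    Measure.prod_apply hSmeas
  have hfub2 : (ν.prod (gm (n+1))) S = ∫⁻ g, ν {y | ‖g‖ ≤ ⟪y, g⟫} ∂(gm (n+1)) :=
    Measure.prod_apply_symm hSmeas
  set y₀ : EuclideanSpace ℝ (Fin (n+1)) := R • (EuclideanSpace.single 0 (1:ℝ)) with hy0def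
  have hy0norm : ‖y₀‖ = R := by
    rw [hy0def, norm_smul, EuclideanSpace.norm_single]
    simp [abs_of_nonneg hRpos.le]
  have hEq1 : ∫⁻ y, gm (n+1) {g | ‖g‖ ≤ ⟪y, g⟫} ∂ν = gm (n+1) {g | ‖g‖ ≤ ⟪y₀, g⟫} := by
    have hc : (fun y => gm (n+1) {g | ‖g‖ ≤ ⟪y, g⟫})
        =ᵐ[ν] (fun _ => gm (n+1) {g | ‖g‖ ≤ ⟪y₀, g⟫}) := by
      filter_upwards [hae_ν] with y hy
      exact hmconst y y₀ (by rw [hy, hy0norm])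
    rw [lintegral_congr_ae hc, lintegral_const, measure_univ, mul_one]
  have hEq2 : ∫⁻ g, ν {y | ‖g‖ ≤ ⟪y, g⟫} ∂(gm (n+1))
      = ν {y | 1 ≤ ⟪y, e⟫} * gm (n+1) univ := by
    have hc : (fun g => ν {y : EuclideanSpace ℝ (Fin (n+1)) | ‖g‖ ≤ ⟪y, g⟫})
        =ᵐ[gm (n+1)] (fun _ => ν {y | 1 ≤ ⟪y, e⟫}) := by
      filter_upwards [hae_m] with g hg
      have hgpos : (0:ℝ) < ‖g‖ := norm_pos_iff.2 hg
      have hseteq : {y : EuclideanSpace ℝ (Fin (n+1)) | ‖g‖ ≤ ⟪y, g⟫}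
          = {y | 1 ≤ ⟪y, (‖g‖⁻¹ : ℝ) • g⟫} := by
        ext y
        simp only [Set.mem_setOf_eq, real_inner_smul_right]
        rw [le_inv_mul_iff₀ hgpos, mul_one]
      rw [hseteq]
      exact hνconst _ e (by
        rw [norm_smul, norm_inv, norm_norm, inv_mul_cancel₀ hgpos.ne', hnorme])
    rw [lintegral_congr_ae hc, lintegral_const]
  -- identify the coordinate form of the main event
  have hsets : {g : EuclideanSpace ℝ (Fin (n+1)) | ‖g‖ ≤ ⟪y₀, g⟫}
      = {g : EuclideanSpace ℝ (Fin (n+1)) | ‖g‖ ≤ Real.sqrt (3*((n:ℝ)+1)) * g 0} := by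
    have hcast : Real.sqrt (3*((n:ℝ)+1)) = R := by rw [hRdef]; push_cast; ring_nf
    ext g
    simp only [Set.mem_setOf_eq, hy0def, real_inner_smul_left, EuclideanSpace.inner_single_left,
      map_one, one_mul, hcast]
  -- main chain
  have hchain : ENNReal.ofReal ((3/20) * (1 - Real.exp (-((n:ℝ)+1)/3)))
        * (ENNReal.ofReal (Real.sqrt (2*π)) ^ (n+1))
      ≤ ν {y | 1 ≤ ⟪y, e⟫} * (ENNReal.ofReal (Real.sqrt (2*π)) ^ (n+1)) := by
    calc ENNReal.ofReal ((3/20) * (1 - Real.exp (-((n:ℝ)+1)/3)))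
          * (ENNReal.ofReal (Real.sqrt (2*π)) ^ (n+1))
        ≤ gm (n+1) {g : EuclideanSpace ℝ (Fin (n+1))
            | ‖g‖ ≤ Real.sqrt (3*((n:ℝ)+1)) * g 0} := gm_main n
      _ = gm (n+1) {g | ‖g‖ ≤ ⟪y₀, g⟫} := by rw [hsets]
      _ = (ν.prod (gm (n+1))) S := by rw [hfub1, hEq1]
      _ = ν {y | 1 ≤ ⟪y, e⟫} * gm (n+1) univ := by rw [hfub2, hEq2]
      _ = ν {y | 1 ≤ ⟪y, e⟫} * (ENNReal.ofReal (Real.sqrt (2*π)) ^ (n+1)) := by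
          rw [gm_univ]
  have hZ0 : (ENNReal.ofReal (Real.sqrt (2*π)) ^ (n+1)) ≠ 0 := by
    apply pow_ne_zero
    have := Real.sqrt_pos.2 (show (0:ℝ) < 2*π by positivity)
    simp only [ne_eq, ENNReal.ofReal_eq_zero, not_le]
    linarith
  have hZtop : (ENNReal.ofReal (Real.sqrt (2*π)) ^ (n+1)) ≠ ⊤ :=
    ENNReal.pow_ne_top ENNReal.ofReal_ne_top
  have hcancel : ENNReal.ofReal ((3/20) * (1 - Real.exp (-((n:ℝ)+1)/3)))
      ≤ ν {y | 1 ≤ ⟪y, e⟫} := (ENNReal.mul_le_mul_iff_left hZ0 hZtop).1 hchain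
  rw [hset]
  have hnum : (0.15 : ℝ) * (1 - Real.exp (-(((n+1 : ℕ)) : ℝ)/3))
      = (3/20) * (1 - Real.exp (-((n:ℝ)+1)/3)) := by
    push_cast
    norm_num
  rw [hnum]
  exact hcancel
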